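/- If ζ₁ and ζ₂ are both twice continuously differentiable functions on [−ℓ,ℓ] solving the equilibrium capillary problem with the same pressure P ∈ ℝ, then ζ₁(x) = ζ₂(x) for all x ∈ [−ℓ,ℓ]. -/

import Mathlib

open Set MeasureTheory

/-- One-sided derivative of a function regarded as a function on `[-ℓ, ℓ]`. -/
noncomputable def capD (ℓ : ℝ) (ζ : ℝ → ℝ) : ℝ → ℝ :=
  derivWithin ζ (Set.Icc (-ℓ) ℓ)

/-- The mean curvature operator `𝓗(ζ) = (ζ'/√(1+(ζ')²))'` on `[-ℓ, ℓ]`. -/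
noncomputable def meanCurv (ℓ : ℝ) (ζ : ℝ → ℝ) : ℝ → ℝ :=
  derivWithin (fun x => capD ℓ ζ x / Real.sqrt (1 + (capD ℓ ζ x) ^ 2)) (Set.Icc (-ℓ) ℓ)

/-- `ζ` is a twice continuously differentiable solution of the equilibrium capillary
problem on `[-ℓ, ℓ]` with pressure `P`. -/
def IsCapSol (g σ ℓ γ P : ℝ) (ζ : ℝ → ℝ) : Prop :=
  ContDiffOn ℝ 2 ζ (Set.Icc (-ℓ) ℓ) ∧
  (∀ x ∈ Set.Ioo (-ℓ) ℓ, g * ζ x - σ * meanCurv ℓ ζ x = P) ∧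
  σ * capD ℓ ζ ℓ / Real.sqrt (1 + (capD ℓ ζ ℓ) ^ 2) = γ ∧
  σ * capD ℓ ζ (-ℓ) / Real.sqrt (1 + (capD ℓ ζ (-ℓ)) ^ 2) = -γ

/-- The capillary energy functional `𝓘`, expressed in terms of a function `ζ`
and its derivative `ζ'`. -/
noncomputable def capEnergy (g σ ℓ γ : ℝ) (ζ ζ' : ℝ → ℝ) : ℝ :=
  (∫ x in (-ℓ)..ℓ, (g / 2 * ζ x ^ 2 + σ * Real.sqrt (1 + ζ' x ^ 2))) -
    γ * (ζ ℓ + ζ (-ℓ))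

/-- `ψ ∈ W^{1,1}((-ℓ,ℓ))` with weak derivative `ψ'`. -/
def IsW11 (ℓ : ℝ) (ψ ψ' : ℝ → ℝ) : Prop :=
  MeasureTheory.IntegrableOn ψ' (Set.Ioo (-ℓ) ℓ) ∧
  ∀ x ∈ Set.Icc (-ℓ) ℓ, ψ x = ψ (-ℓ) + ∫ t in (-ℓ)..x, ψ' t

/-- The auxiliary function `t ↦ t / √(1+t²)`. -/
noncomputable def capF (t : ℝ) : ℝ := t / Real.sqrt (1 + t ^ 2)

lemma capF_monotone : Monotone capF := by
  have h : ∀ t : ℝ, capF t = Real.sin (Real.arctan t) := fun t => (Real.sin_arctan t).symm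
  have hs : StrictMono capF := by
    intro a b hab
    rw [h a, h b]
    exact Real.strictMonoOn_sin (mem_Icc_of_Ioo (Real.arctan_mem_Ioo a))
      (mem_Icc_of_Ioo (Real.arctan_mem_Ioo b)) (Real.arctan_strictMono hab)
  exact hs.monotone

lemma capF_prod_nonneg (a b : ℝ) : 0 ≤ (a - b) * (capF a - capF b) := by
  rcases le_total a b with hab | hab
  · have h1 : a - b ≤ 0 := by linarith
    have h2 : capF a - capF b ≤ 0 := by
      have := capF_monotone hab; linarith
    nlinarith
  · have h1 : 0 ≤ a - b := by linarith
    have h2 : 0 ≤ capF a - capF b := by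
      have := capF_monotone hab; linarith
    positivity

lemma capF_contDiff : ContDiff ℝ 1 capF := by
  rw [contDiff_iff_contDiffAt]
  intro t
  have h1 : (1 : ℝ) + t ^ 2 ≠ 0 := by positivity
  have hs : Real.sqrt (1 + t ^ 2) ≠ 0 := by positivity
  exact contDiffAt_id.div (((contDiffAt_const (c := (1:ℝ))).add (contDiffAt_id.pow 2)).sqrt h1) hs

section Facts

variable {ℓ : ℝ} {ζ : ℝ → ℝ}

lemma capUniqueDiff (hℓ : 0 < ℓ) : UniqueDiffOn ℝ (Set.Icc (-ℓ) ℓ) :=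
  uniqueDiffOn_Icc (by linarith)

lemma capD_contDiffOn (hℓ : 0 < ℓ) (hc : ContDiffOn ℝ 2 ζ (Set.Icc (-ℓ) ℓ)) :
    ContDiffOn ℝ 1 (capD ℓ ζ) (Set.Icc (-ℓ) ℓ) :=
  hc.derivWithin (capUniqueDiff hℓ) (by norm_num)

lemma capG_contDiffOn (hℓ : 0 < ℓ) (hc : ContDiffOn ℝ 2 ζ (Set.Icc (-ℓ) ℓ)) :
    ContDiffOn ℝ 1 (fun x => capF (capD ℓ ζ x)) (Set.Icc (-ℓ) ℓ) :=
  capF_contDiff.comp_contDiffOn (capD_contDiffOn hℓ hc)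

lemma meanCurv_eq_derivWithin_capG :
    meanCurv ℓ ζ = derivWithin (fun x => capF (capD ℓ ζ x)) (Set.Icc (-ℓ) ℓ) := rfl

lemma meanCurv_continuousOn (hℓ : 0 < ℓ) (hc : ContDiffOn ℝ 2 ζ (Set.Icc (-ℓ) ℓ)) :
    ContinuousOn (meanCurv ℓ ζ) (Set.Icc (-ℓ) ℓ) := by
  rw [meanCurv_eq_derivWithin_capG]
  exact (capG_contDiffOn hℓ hc).continuousOn_derivWithin (capUniqueDiff hℓ) le_rfl

lemma hasDerivAt_zeta (hℓ : 0 < ℓ) (hc : ContDiffOn ℝ 2 ζ (Set.Icc (-ℓ) ℓ))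
    {x : ℝ} (hx : x ∈ Set.Ioo (-ℓ) ℓ) : HasDerivAt ζ (capD ℓ ζ x) x := by
  have hmem : Set.Icc (-ℓ) ℓ ∈ nhds x := Icc_mem_nhds hx.1 hx.2
  have hd : DifferentiableWithinAt ℝ ζ (Set.Icc (-ℓ) ℓ) x :=
    (hc.differentiableOn (by norm_num)) x (Set.Ioo_subset_Icc_self hx)
  exact hd.hasDerivWithinAt.hasDerivAt hmem

lemma hasDerivAt_capG (hℓ : 0 < ℓ) (hc : ContDiffOn ℝ 2 ζ (Set.Icc (-ℓ) ℓ))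
    {x : ℝ} (hx : x ∈ Set.Ioo (-ℓ) ℓ) :
    HasDerivAt (fun x => capF (capD ℓ ζ x)) (meanCurv ℓ ζ x) x := by
  have hmem : Set.Icc (-ℓ) ℓ ∈ nhds x := Icc_mem_nhds hx.1 hx.2
  have hd : DifferentiableWithinAt ℝ (fun x => capF (capD ℓ ζ x)) (Set.Icc (-ℓ) ℓ) x :=
    ((capG_contDiffOn hℓ hc).differentiableOn (by norm_num)) x (Set.Ioo_subset_Icc_self hx)
  rw [meanCurv_eq_derivWithin_capG]
  exact hd.hasDerivWithinAt.hasDerivAt hmem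

end Facts

/-- Uniqueness of twice continuously differentiable solutions of
the equilibrium capillary problem with a given pressure `P`. -/
theorem stmt1 (g σ ℓ γ P : ℝ) (hg : 0 < g) (hσ : 0 < σ) (hℓ : 0 < ℓ)
    (ζ₁ ζ₂ : ℝ → ℝ)
    (h₁ : IsCapSol g σ ℓ γ P ζ₁) (h₂ : IsCapSol g σ ℓ γ P ζ₂) :
    ∀ x ∈ Set.Icc (-ℓ) ℓ, ζ₁ x = ζ₂ x := by
  obtain ⟨hc₁, hpde₁, hbcr₁, hbcl₁⟩ := h₁
  obtain ⟨hc₂, hpde₂, hbcr₂, hbcl₂⟩ := h₂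
  have hll : (-ℓ) < ℓ := by linarith
  have hle : (-ℓ) ≤ ℓ := hll.le
  set u : ℝ → ℝ := fun x => ζ₁ x - ζ₂ x with hu
  set v : ℝ → ℝ := fun x => capF (capD ℓ ζ₁ x) - capF (capD ℓ ζ₂ x) with hv
  set u' : ℝ → ℝ := fun x => capD ℓ ζ₁ x - capD ℓ ζ₂ x with hu'
  set v' : ℝ → ℝ := fun x => meanCurv ℓ ζ₁ x - meanCurv ℓ ζ₂ x with hv'
  -- continuity
  have hucont : ContinuousOn u (Set.Icc (-ℓ) ℓ) :=
    (hc₁.continuousOn).sub (hc₂.continuousOn)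
  have hvcont : ContinuousOn v (Set.Icc (-ℓ) ℓ) :=
    ((capG_contDiffOn hℓ hc₁).continuousOn).sub ((capG_contDiffOn hℓ hc₂).continuousOn)
  have hu'cont : ContinuousOn u' (Set.Icc (-ℓ) ℓ) :=
    ((capD_contDiffOn hℓ hc₁).continuousOn).sub ((capD_contDiffOn hℓ hc₂).continuousOn)
  have hv'cont : ContinuousOn v' (Set.Icc (-ℓ) ℓ) :=
    (meanCurv_continuousOn hℓ hc₁).sub (meanCurv_continuousOn hℓ hc₂)
  -- boundary values of v vanish
  have key : ∀ a b : ℝ, σ * a / Real.sqrt (1 + a ^ 2) = σ * b / Real.sqrt (1 + b ^ 2) →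
      capF a = capF b := by
    intro a b hab
    have h : σ * capF a = σ * capF b := by
      unfold capF
      rw [← mul_div_assoc, ← mul_div_assoc]
      exact hab
    exact mul_left_cancel₀ hσ.ne' h
  have hvr : v ℓ = 0 := by
    have h := key _ _ (hbcr₁.trans hbcr₂.symm)
    simp only [hv]
    rw [h, sub_self]
  have hvl : v (-ℓ) = 0 := by
    have h := key _ _ (hbcl₁.trans hbcl₂.symm)
    simp only [hv]
    rw [h, sub_self]
  -- integration by parts
  have hderiv : ∀ x ∈ Set.Ioo (-ℓ) ℓ,
      HasDerivAt (fun x => u x * v x) (u' x * v x + u x * v' x) x := by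
    intro x hx
    have hU : HasDerivAt u (u' x) x :=
      (hasDerivAt_zeta hℓ hc₁ hx).sub (hasDerivAt_zeta hℓ hc₂ hx)
    have hV : HasDerivAt v (v' x) x :=
      (hasDerivAt_capG hℓ hc₁ hx).sub (hasDerivAt_capG hℓ hc₂ hx)
    exact hU.mul hV
  have hintcont : ContinuousOn (fun x => u' x * v x + u x * v' x) (Set.Icc (-ℓ) ℓ) :=
    (hu'cont.mul hvcont).add (hucont.mul hv'cont)
  have hIcc_eq : Set.uIcc (-ℓ) ℓ = Set.Icc (-ℓ) ℓ := Set.uIcc_of_le hle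
  have hint : IntervalIntegrable (fun x => u' x * v x + u x * v' x) volume (-ℓ) ℓ := by
    apply ContinuousOn.intervalIntegrable
    rwa [hIcc_eq]
  have hint1 : IntervalIntegrable (fun x => u' x * v x) volume (-ℓ) ℓ := by
    apply ContinuousOn.intervalIntegrable
    rw [hIcc_eq]; exact hu'cont.mul hvcont
  have hint2 : IntervalIntegrable (fun x => u x * v' x) volume (-ℓ) ℓ := by
    apply ContinuousOn.intervalIntegrable
    rw [hIcc_eq]; exact hucont.mul hv'cont
  have hIBP : ∫ x in (-ℓ)..ℓ, (u' x * v x + u x * v' x) = u ℓ * v ℓ - u (-ℓ) * v (-ℓ) :=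
    intervalIntegral.integral_eq_sub_of_hasDerivAt_of_le hle (hucont.mul hvcont) hderiv hint
  have hIBP0 : ∫ x in (-ℓ)..ℓ, (u' x * v x + u x * v' x) = 0 := by
    rw [hIBP, hvr, hvl]; ring
  have hsplit : (∫ x in (-ℓ)..ℓ, u' x * v x) + (∫ x in (-ℓ)..ℓ, u x * v' x) = 0 := by
    rw [← intervalIntegral.integral_add hint1 hint2]; exact hIBP0
  -- rewrite ∫ u v' using the PDE
  have haeℓ : ∀ᵐ x : ℝ, x ≠ ℓ := by
    have h : {x : ℝ | ¬ x ≠ ℓ} = {ℓ} := by ext y; simp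
    rw [ae_iff, h]
    exact measure_singleton ℓ
  have haenl : ∀ᵐ x : ℝ, x ≠ -ℓ := by
    have h : {x : ℝ | ¬ x ≠ -ℓ} = {-ℓ} := by ext y; simp
    rw [ae_iff, h]
    exact measure_singleton (-ℓ)
  have hcongr : (∫ x in (-ℓ)..ℓ, u x * v' x) = ∫ x in (-ℓ)..ℓ, g / σ * u x ^ 2 := by
    apply intervalIntegral.integral_congr_ae
    filter_upwards [haeℓ] with x hxne hxmem
    rw [Set.uIoc_of_le hle] at hxmem
    have hx : x ∈ Set.Ioo (-ℓ) ℓ := ⟨hxmem.1, lt_of_le_of_ne hxmem.2 hxne⟩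
    have e1 := hpde₁ x hx
    have e2 := hpde₂ x hx
    have hvv : v' x = g / σ * u x := by
      simp only [hv', hu]
      field_simp
      linarith
    rw [hvv]; ring
  -- sign information
  have hpos1 : 0 ≤ ∫ x in (-ℓ)..ℓ, u' x * v x := by
    apply intervalIntegral.integral_nonneg hle
    intro x _
    simpa [hu', hv] using capF_prod_nonneg (capD ℓ ζ₁ x) (capD ℓ ζ₂ x)
  have hposu : 0 ≤ ∫ x in (-ℓ)..ℓ, u x ^ 2 :=
    intervalIntegral.integral_nonneg hle (fun x _ => sq_nonneg _)
  have hgs : 0 < g / σ := div_pos hg hσ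
  have hI0 : (∫ x in (-ℓ)..ℓ, u x ^ 2) = 0 := by
    have h1 : g / σ * (∫ x in (-ℓ)..ℓ, u x ^ 2) ≤ 0 := by
      rw [← intervalIntegral.integral_const_mul, ← hcongr]
      linarith
    nlinarith
  -- conclude u = 0 on the interval
  have hsqint : IntervalIntegrable (fun x => u x ^ 2) volume (-ℓ) ℓ := by
    apply ContinuousOn.intervalIntegrable
    rw [hIcc_eq]; exact hucont.pow 2
  have hae0 := (intervalIntegral.integral_eq_zero_iff_of_nonneg_ae
    (Filter.Eventually.of_forall fun x => sq_nonneg (u x)) hsqint).1 hI0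
  have hempty : Set.Ioc ℓ (-ℓ) = (∅ : Set ℝ) := Set.Ioc_eq_empty (by linarith)
  rw [hempty, Set.union_empty] at hae0
  have hae1 : ∀ᵐ x : ℝ, x ∈ Set.Ioc (-ℓ) ℓ → u x ^ 2 = 0 := by
    have := (ae_restrict_iff' measurableSet_Ioc).1 hae0
    filter_upwards [this] with x hx hx'
    simpa using hx hx'
  have hae2 : (fun x => u x ^ 2) =ᵐ[volume.restrict (Set.Icc (-ℓ) ℓ)] 0 := by
    rw [Filter.EventuallyEq, ae_restrict_iff' measurableSet_Icc]
    filter_upwards [hae1, haenl] with x h1 h2 hxI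
    simpa using h1 ⟨lt_of_le_of_ne hxI.1 (Ne.symm h2), hxI.2⟩
  have hEq : Set.EqOn (fun x => u x ^ 2) 0 (Set.Icc (-ℓ) ℓ) := by
    apply MeasureTheory.Measure.eqOn_of_ae_eq hae2 (hucont.pow 2) continuousOn_const
    rw [interior_Icc, closure_Ioo hll.ne]
  intro x hx
  have hu0 : u x = 0 := by simpa using hEq hx
  have h0 : ζ₁ x - ζ₂ x = 0 := hu0
  linarith
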